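/- If M = (E, ρ) is a q-matroid, then the function ρ*(V) = dim V − ρ(E) + ρ(V^⊥) also satisfies the q-matroid rank axioms, so M* = (E, ρ*) is a q-matroid; moreover (M*)* = M. -/

import Mathlib

open Submodule Module

variable (K L : Type) [Field K] [Fintype K] [Field L] [Fintype L] [Algebra K L]

/-- Orthogonal complement w.r.t. the standard dot product on `ι → K`. -/
def stdPerp {ι : Type} [Fintype ι] (V : Submodule K (ι → K)) : Submodule K (ι → K) where
  carrier := {w | ∀ v ∈ V, ∑ j, v j * w j = 0}
  zero_mem' := by intro v hv; simp
  add_mem' := by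
    intro a b ha hb v hv
    simp [Pi.add_apply, mul_add, Finset.sum_add_distrib, ha v hv, hb v hv]
  smul_mem' := by
    intro c a ha v hv
    simp only [Pi.smul_apply, smul_eq_mul, mul_left_comm]
    rw [← Finset.mul_sum, ha v hv, mul_zero]

/-- Extension of scalars: the `L`-span of a `K`-subspace of `ι → K` inside `ι → L`. -/
def extScalars {ι : Type} (W : Submodule K (ι → K)) : Submodule L (ι → L) :=
  Submodule.span L ((fun (w : ι → K) (j : ι) => algebraMap K L (w j)) '' (W : Set (ι → K)))

/-- Image of the code `C` under the canonical projection `π_V`. -/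
def projImage {ι : Type} [Fintype ι] (C : Set (ι → L)) (V : Submodule K (ι → K)) :
    Set ((ι → L) ⧸ extScalars K L (stdPerp K V)) :=
  Submodule.Quotient.mk '' C

/-- The rank function induced by a code: `ρ_C(V) = log_{q^m} |π_V(C)|`. -/
noncomputable def rho {ι : Type} [Fintype ι] (C : Set (ι → L)) (V : Submodule K (ι → K)) : ℕ :=
  Nat.log (Fintype.card L) (Nat.card (projImage K L C V))

/-- `C` is an almost affine rank-metric code. -/
def AlmostAffine {ι : Type} [Fintype ι] (C : Set (ι → L)) : Prop :=
  ∀ V : Submodule K (ι → K), ∃ e : ℕ, Nat.card (projImage K L C V) = (Fintype.card L) ^ e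

/-- Support of a vector `v ∈ L^ι` w.r.t. a `K`-basis `B` of `L`. -/
def supp {ι : Type} {m : ℕ} (B : Basis (Fin m) K L) (v : ι → L) : Submodule K (ι → K) :=
  Submodule.span K (Set.range fun i : Fin m => fun j : ι => B.repr (v j) i)

/-- The subcode `C(Z,x) = {c ∈ C : π_Z(c) = π_Z(x)}`. -/
def subcode {ι : Type} [Fintype ι] (C : Set (ι → L)) (Z : Submodule K (ι → K)) (x : ι → L) :
    Set (ι → L) :=
  {c ∈ C | (Submodule.Quotient.mk (p := extScalars K L (stdPerp K Z)) c) =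
      Submodule.Quotient.mk x}

/-- The `q`-matroid rank axioms (R1)–(R3). -/
def IsQMatroidRank {E : Type} [AddCommGroup E] [Module K E] (r : Submodule K E → ℕ) : Prop :=
  (∀ V : Submodule K E, r V ≤ finrank K V) ∧
  (∀ V W : Submodule K E, V ≤ W → r V ≤ r W) ∧
  (∀ V W : Submodule K E, r (V ⊔ W) + r (V ⊓ W) ≤ r V + r W)


section Aux

variable {K : Type} [Field K] {n : ℕ}

/-- The standard dot-product bilinear form on `Fin n → K`. -/
def dotForm (K : Type) [Field K] (n : ℕ) : LinearMap.BilinForm K (Fin n → K) :=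
  LinearMap.mk₂ K (fun v w => ∑ j, v j * w j)
    (by intros; simp [add_mul, Finset.sum_add_distrib])
    (by intros; simp [Finset.mul_sum, mul_assoc])
    (by intros; simp [mul_add, Finset.sum_add_distrib])
    (by intros; simp [Finset.mul_sum, mul_left_comm])

lemma dotForm_apply (v w : Fin n → K) : dotForm K n v w = ∑ j, v j * w j := rfl

lemma stdPerp_eq_orthogonal (V : Submodule K (Fin n → K)) :
    stdPerp K V = (dotForm K n).orthogonal V := by
  ext w
  simp only [LinearMap.BilinForm.mem_orthogonal_iff, LinearMap.BilinForm.IsOrtho, dotForm_apply]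
  rfl

lemma dotForm_isRefl : (dotForm K n).IsRefl := by
  intro x y h
  simpa [dotForm_apply, mul_comm] using h

lemma dotForm_nondeg : (dotForm K n).Nondegenerate := by
  refine ⟨?_, ?_⟩
  · intro m hm
    funext j
    simpa [dotForm_apply, Finset.sum_eq_single j, Pi.single_apply] using hm (Pi.single j 1)
  · intro m hm
    funext j
    simpa [dotForm_apply, Finset.sum_eq_single j, Pi.single_apply] using hm (Pi.single j 1)

lemma finrank_stdPerp (V : Submodule K (Fin n → K)) :
    finrank K (stdPerp K V) = n - finrank K V := by
  rw [stdPerp_eq_orthogonal,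
    LinearMap.BilinForm.finrank_orthogonal dotForm_nondeg,
    Module.finrank_fin_fun]

lemma stdPerp_stdPerp (V : Submodule K (Fin n → K)) : stdPerp K (stdPerp K V) = V := by
  rw [stdPerp_eq_orthogonal, stdPerp_eq_orthogonal]
  exact LinearMap.BilinForm.orthogonal_orthogonal dotForm_nondeg dotForm_isRefl V

lemma stdPerp_antitone {V W : Submodule K (Fin n → K)} (h : V ≤ W) :
    stdPerp K W ≤ stdPerp K V := by
  intro w hw v hv
  exact hw v (h hv)

lemma stdPerp_sup (V W : Submodule K (Fin n → K)) :
    stdPerp K (V ⊔ W) = stdPerp K V ⊓ stdPerp K W := by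
  rw [stdPerp_eq_orthogonal, stdPerp_eq_orthogonal, stdPerp_eq_orthogonal]
  ext w
  simp only [LinearMap.BilinForm.mem_orthogonal_iff, Submodule.mem_inf,
    LinearMap.BilinForm.mem_orthogonal_iff]
  constructor
  · intro h
    exact ⟨fun v hv => h v (Submodule.mem_sup_left hv), fun v hv => h v (Submodule.mem_sup_right hv)⟩
  · rintro ⟨h1, h2⟩ v hv
    have : V ⊔ W ≤ Submodule.comap ((dotForm K n).flip w) (⊥ : Submodule K K) := by
      refine sup_le ?_ ?_ <;> intro u hu <;>
        simp only [Submodule.mem_comap, LinearMap.flip_apply, Submodule.mem_bot]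
      · exact h1 u hu
      · exact h2 u hu
    simpa [LinearMap.BilinForm.IsOrtho] using this hv

lemma stdPerp_inf (V W : Submodule K (Fin n → K)) :
    stdPerp K (V ⊓ W) = stdPerp K V ⊔ stdPerp K W := by
  conv_lhs => rw [← stdPerp_stdPerp V, ← stdPerp_stdPerp W, ← stdPerp_sup]
  rw [stdPerp_stdPerp]

lemma stdPerp_top : stdPerp K (⊤ : Submodule K (Fin n → K)) = ⊥ := by
  rw [stdPerp_eq_orthogonal]
  exact LinearMap.BilinForm.orthogonal_top_eq_bot dotForm_nondeg

/-- Key matroid lemma: for nested subspaces, the rank increases by at most the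
dimension gap. -/
lemma rank_diff {r : Submodule K (Fin n → K) → ℕ} (hr : IsQMatroidRank K r) :
    ∀ (d : ℕ) (A B : Submodule K (Fin n → K)), B ≤ A →
      finrank K A ≤ finrank K B + d → r A ≤ r B + d := by
  intro d
  induction d with
  | zero =>
    intro A B hBA h
    have : B = A := Submodule.eq_of_le_of_finrank_le hBA (by omega)
    simp [this]
  | succ d ih =>
    intro A B hBA h
    by_cases hAB : A ≤ B
    · have : A = B := le_antisymm hAB hBA
      simp [this]
    · obtain ⟨x, hxA, hxB⟩ : ∃ x ∈ A, x ∉ B := Set.not_subset.mp hAB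
      have hx0 : x ≠ 0 := fun h0 => hxB (h0 ▸ B.zero_mem)
      set B' := B ⊔ (K ∙ x) with hB'
      have hB'A : B' ≤ A := sup_le hBA ((Submodule.span_singleton_le_iff_mem x A).mpr hxA)
      have hlt : B < B' := lt_of_le_of_ne le_sup_left (by
        intro hEq
        exact hxB (hEq ▸ Submodule.mem_sup_right (Submodule.mem_span_singleton_self x)))
      have hfr : finrank K B + 1 ≤ finrank K B' := Submodule.finrank_lt_finrank_of_lt hlt
      have hstep : r B' ≤ r B + 1 := by
        have h3 := hr.2.2 B (K ∙ x)
        rw [← hB'] at h3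
        have h1 : r (K ∙ x) ≤ 1 := by
          have := hr.1 (K ∙ x)
          rwa [finrank_span_singleton hx0] at this
        omega
      have := ih A B' hB'A (by omega)
      omega

lemma rank_top_le {r : Submodule K (Fin n → K) → ℕ} (hr : IsQMatroidRank K r)
    (V : Submodule K (Fin n → K)) : r ⊤ ≤ r (stdPerp K V) + finrank K V := by
  have hd : finrank K V ≤ n := by
    simpa [Module.finrank_fin_fun] using Submodule.finrank_le V
  have h1 : finrank K (⊤ : Submodule K (Fin n → K)) ≤
      finrank K (stdPerp K V) + finrank K V := by
    rw [finrank_top, Module.finrank_fin_fun, finrank_stdPerp]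
    omega
  exact rank_diff hr (finrank K V) ⊤ (stdPerp K V) le_top h1

end Aux

/-- the dual rank function `ρ*(V) = dim V − ρ(E) + ρ(V^⊥)` satisfies the
q-matroid axioms, and the double dual equals the original rank function. -/
theorem stmt_4 {K : Type} [Field K] {n : ℕ} [Fintype K]
    (r : Submodule K (Fin n → K) → ℕ) (hr : IsQMatroidRank K r) :
    IsQMatroidRank K (fun V : Submodule K (Fin n → K) =>
        finrank K V + r (stdPerp K V) - r ⊤) ∧
    (∀ V : Submodule K (Fin n → K),
      finrank K V +
          (fun W : Submodule K (Fin n → K) => finrank K W + r (stdPerp K W) - r ⊤)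
            (stdPerp K V) -
          (fun W : Submodule K (Fin n → K) => finrank K W + r (stdPerp K W) - r ⊤) ⊤
        = r V) := by
  obtain ⟨hR1, hR2, hR3⟩ := hr
  have hfin : ∀ V : Submodule K (Fin n → K), finrank K V ≤ n := fun V => by
    simpa [Module.finrank_fin_fun] using Submodule.finrank_le V
  have htop : ∀ V : Submodule K (Fin n → K), r ⊤ ≤ r (stdPerp K V) + finrank K V :=
    rank_top_le ⟨hR1, hR2, hR3⟩
  constructor
  · refine ⟨fun V => ?_, fun V W hVW => ?_, fun V W => ?_⟩
    · beta_reduce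
      have := hR2 (stdPerp K V) ⊤ le_top
      omega
    · beta_reduce
      have hperp : stdPerp K W ≤ stdPerp K V := stdPerp_antitone hVW
      have hfrV := finrank_stdPerp V
      have hfrW := finrank_stdPerp W
      have hmono : finrank K V ≤ finrank K W := Submodule.finrank_mono hVW
      have hfV := hfin V
      have hfW := hfin W
      have hkey : r (stdPerp K V) ≤ r (stdPerp K W) +
          (finrank K (stdPerp K V) - finrank K (stdPerp K W)) := by
        refine rank_diff ⟨hR1, hR2, hR3⟩ _ _ _ hperp ?_
        have := Submodule.finrank_mono hperp
        omega
      have := htop V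
      have := htop W
      omega
    · have hsum : finrank K ↥(V ⊔ W) + finrank K ↥(V ⊓ W) = finrank K V + finrank K W :=
        Submodule.finrank_sup_add_finrank_inf_eq V W
      have hsub : r (stdPerp K V ⊔ stdPerp K W) + r (stdPerp K V ⊓ stdPerp K W) ≤
          r (stdPerp K V) + r (stdPerp K W) := hR3 _ _
      beta_reduce
      rw [stdPerp_sup, stdPerp_inf]
      have ht1 := htop (V ⊔ W)
      rw [stdPerp_sup] at ht1
      have ht2 := htop (V ⊓ W)
      rw [stdPerp_inf] at ht2
      have := htop V
      have := htop W
      have h1 := hfin (V ⊔ W)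
      have h2 := hfin (V ⊓ W)
      omega
  · intro V
    simp only
    have hbot : r (stdPerp K (⊤ : Submodule K (Fin n → K))) = 0 := by
      rw [stdPerp_top]
      have := hR1 (⊥ : Submodule K (Fin n → K))
      simpa using this
    rw [hbot, stdPerp_stdPerp, finrank_stdPerp, finrank_top, Module.finrank_fin_fun]
    have h1 := htop V
    have h2 : r ⊤ ≤ r (stdPerp K V) + finrank K V := htop V
    have h3 : r V ≤ r ⊤ := hR2 V ⊤ le_top
    have h4 : r (stdPerp K V) ≤ r ⊤ := hR2 _ ⊤ le_top
    have h5 := htop (stdPerp K V)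
    rw [stdPerp_stdPerp, finrank_stdPerp] at h5
    have h6 := hfin V
    have h7 : r ⊤ ≤ n := by
      have := hR1 (⊤ : Submodule K (Fin n → K))
      rwa [finrank_top, Module.finrank_fin_fun] at this
    omega
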